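/- With the continued fraction algorithm attached to a floor function s on a nonarchimedean field (|x-s(x)| < 1, s(x)=s(y) when |x-y|<1), set ε_n(α) = 1/|V_{n-1}(α)| = ∏_{j=1}^{n} 1/|a_j(α)| with ε_0 = 1. If the expansion of α has length ≥ n and |α - α'| < ε_n(α)², then the expansion of α' has length ≥ n and the first n+1 partial quotients of α and α' agree. -/

import Mathlib

/-- If the continued fraction expansion of `α` (attached to a floor function `s` on a
nonarchimedean field) has length at least `n` and `|α - α'| < ε_n(α)²` where
`ε_n(α) = ∏_{j=1}^n |a_j(α)|⁻¹`, then the expansion of `α'` also has length at least `n`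
and the first `n+1` partial quotients of `α` and `α'` agree. -/
theorem stmt_14 {K : Type*} [Field K] (abv : AbsoluteValue K ℝ)
    (hna : IsNonarchimedean (fun x => abv x))
    (s : K → K)
    (hfloor : ∀ x, abv (x - s x) < 1)
    (hloc : ∀ x y, abv (x - y) < 1 → s x = s y)
    (α α' : K) (n : ℕ) (αseq : ℕ → K)
    (hα0 : αseq 0 = α)
    (hlen : ∀ k, k < n → αseq k ≠ s (αseq k) ∧ αseq (k + 1) = (αseq k - s (αseq k))⁻¹)
    (hbig : ∀ k, 1 ≤ k → k ≤ n → 1 < abv (s (αseq k)))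
    (hclose : abv (α - α') < (∏ j ∈ Finset.Icc 1 n, (abv (s (αseq j)))⁻¹) ^ 2) :
    ∃ βseq : ℕ → K, βseq 0 = α' ∧
      (∀ k, k < n → βseq k ≠ s (βseq k) ∧ βseq (k + 1) = (βseq k - s (βseq k))⁻¹) ∧
      ∀ k, k ≤ n → s (βseq k) = s (αseq k) := by
  classical
  -- ultrametric helper
  have hadd : ∀ x y : K, abv y < abv x → abv (x + y) = abv x := by
    intro x y h
    have h1 : abv (x + y) ≤ abv x := le_trans (hna x y) (max_le le_rfl h.le)
    have h2 : abv x ≤ max (abv (x + y)) (abv y) := by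
      have := hna (x + y) (-y)
      simpa [abv.map_neg] using this
    rcases max_cases (abv (x + y)) (abv y) with ⟨he, _⟩ | ⟨he, _⟩
    · exact le_antisymm h1 (h2.trans_eq he)
    · exact absurd (h.trans_le (h2.trans_eq he)) (lt_irrefl _)
  set t : ℕ → ℝ := fun j => abv (s (αseq j)) with ht
  set ε : ℕ → ℝ := fun k => ∏ j ∈ Finset.Icc (k + 1) n, (t j)⁻¹ with hεdef
  have htpos : ∀ j, 1 ≤ j → j ≤ n → 0 < t j := fun j h1 h2 =>
    lt_trans one_pos (hbig j h1 h2)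
  have hεpos : ∀ k, 0 < ε k := by
    intro k
    apply Finset.prod_pos
    intro j hj
    rw [Finset.mem_Icc] at hj
    exact inv_pos.mpr (htpos j (le_trans (Nat.le_add_left 1 k) hj.1) hj.2)
  have hεle1 : ∀ k, ε k ≤ 1 := by
    intro k
    apply Finset.prod_le_one
    · intro j hj
      rw [Finset.mem_Icc] at hj
      exact (inv_pos.mpr (htpos j (le_trans (Nat.le_add_left 1 k) hj.1) hj.2)).le
    · intro j hj
      rw [Finset.mem_Icc] at hj
      exact inv_le_one_of_one_le₀ (hbig j (le_trans (Nat.le_add_left 1 k) hj.1) hj.2).le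
  -- splitting the product
  have hεstep : ∀ k, k < n → ε k = (t (k + 1))⁻¹ * ε (k + 1) := by
    intro k hk
    show (∏ j ∈ Finset.Icc (k + 1) n, (t j)⁻¹) = _
    rw [← Finset.Ico_add_one_right_eq_Icc, Finset.prod_eq_prod_Ico_succ_bot (by omega),
      Finset.Ico_add_one_right_eq_Icc]
  -- |αseq k - s (αseq k)| = (t (k+1))⁻¹ for k < n
  have hdist : ∀ k, k < n → abv (αseq k - s (αseq k)) = (t (k + 1))⁻¹ := by
    intro k hk
    obtain ⟨hne, hrec⟩ := hlen k hk
    have hne' : αseq k - s (αseq k) ≠ 0 := sub_ne_zero.mpr hne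
    have hval : abv (αseq (k + 1)) = t (k + 1) := by
      have : αseq (k + 1) = s (αseq (k + 1)) + (αseq (k + 1) - s (αseq (k + 1))) := by ring
      rw [this]
      exact hadd _ _ (lt_trans (hfloor _) (hbig (k + 1) (by omega) hk))
    have : abv (αseq (k + 1)) = (abv (αseq k - s (αseq k)))⁻¹ := by
      rw [hrec, map_inv₀]
    rw [hval] at this
    rw [this, inv_inv]
  -- define βseq
  set βseq : ℕ → K := fun k => Nat.rec α' (fun _ b => (b - s b)⁻¹) k with hβ
  have hβ0 : βseq 0 = α' := rfl
  have hβrec : ∀ k, βseq (k + 1) = (βseq k - s (βseq k))⁻¹ := fun k => rfl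
  -- main induction
  have key : ∀ k, k ≤ n → abv (αseq k - βseq k) < ε k ^ 2 := by
    intro k
    induction k with
    | zero => intro _; rw [hα0, hβ0]; exact hclose
    | succ k ih =>
      intro hk1
      have hk : k < n := hk1
      have hb := ih (le_of_lt hk)
      have hεk2le : ε k ^ 2 ≤ ((t (k + 1))⁻¹) ^ 2 := by
        rw [hεstep k hk, mul_pow]
        have : ε (k + 1) ^ 2 ≤ 1 := by
          have := hεle1 (k + 1)
          nlinarith [hεpos (k + 1)]
        nlinarith [sq_nonneg ((t (k+1))⁻¹)]
      have htk : 1 < t (k + 1) := hbig (k + 1) (by omega) hk1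
      have htkpos : 0 < t (k + 1) := lt_trans one_pos htk
      have hsq_lt : ((t (k + 1))⁻¹) ^ 2 < (t (k + 1))⁻¹ := by
        have hinv : (t (k + 1))⁻¹ < 1 := inv_lt_one_of_one_lt₀ htk
        nlinarith [inv_pos.mpr htkpos]
      -- s (βseq k) = s (αseq k)
      have hdiff_lt1 : abv (αseq k - βseq k) < 1 := lt_of_lt_of_le hb
        (by nlinarith [hεle1 k, hεpos k])
      have hs_eq : s (βseq k) = s (αseq k) := by
        apply hloc
        rw [show βseq k - αseq k = -(αseq k - βseq k) by ring, abv.map_neg]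
        exact hdiff_lt1
      have hdk := hdist k hk
      -- abv (βseq k - s (αseq k)) = (t (k+1))⁻¹
      have hbd : abv (βseq k - s (αseq k)) = (t (k + 1))⁻¹ := by
        have : βseq k - s (αseq k) = (αseq k - s (αseq k)) + (βseq k - αseq k) := by ring
        rw [this, hadd]
        · exact hdk
        rw [hdk, show βseq k - αseq k = -(αseq k - βseq k) by ring, abv.map_neg]
        exact lt_of_lt_of_le (lt_of_lt_of_le hb hεk2le) hsq_lt.le
      have hbne : βseq k - s (αseq k) ≠ 0 := by
        intro h
        rw [h, abv.map_zero] at hbd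
        exact absurd hbd.symm (ne_of_gt (inv_pos.mpr htkpos))
      have hane : αseq k - s (αseq k) ≠ 0 := sub_ne_zero.mpr (hlen k hk).1
      -- compute the difference
      have hform : αseq (k + 1) - βseq (k + 1) =
          (βseq k - αseq k) * (αseq k - s (αseq k))⁻¹ * (βseq k - s (αseq k))⁻¹ := by
        rw [(hlen k hk).2, hβrec, hs_eq]
        field_simp
        ring
      have habv : abv (αseq (k + 1) - βseq (k + 1)) =
          abv (αseq k - βseq k) * t (k + 1) * t (k + 1) := by
        rw [hform, abv.map_mul, abv.map_mul, map_inv₀, map_inv₀, hdk, hbd,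
          show βseq k - αseq k = -(αseq k - βseq k) by ring, abv.map_neg, inv_inv]
      rw [habv]
      have : ε k * (t (k + 1)) = ε (k + 1) := by
        rw [hεstep k hk]
        field_simp
      calc abv (αseq k - βseq k) * t (k + 1) * t (k + 1)
          < ε k ^ 2 * t (k + 1) * t (k + 1) := by
            apply mul_lt_mul_of_pos_right _ htkpos
            exact mul_lt_mul_of_pos_right hb htkpos
        _ = (ε k * t (k + 1)) ^ 2 := by ring
        _ = ε (k + 1) ^ 2 := by rw [this]
  -- conclude
  refine ⟨βseq, hβ0, ?_, ?_⟩
  · intro k hk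
    refine ⟨?_, hβrec k⟩
    intro h
    have hs_eq : s (βseq k) = s (αseq k) := by
      apply hloc
      rw [show βseq k - αseq k = -(αseq k - βseq k) by ring, abv.map_neg]
      exact lt_of_lt_of_le (key k hk.le) (by nlinarith [hεle1 k, hεpos k])
    have hdk := hdist k hk
    have htk : 1 < t (k + 1) := hbig (k + 1) (by omega) hk
    have htkpos : 0 < t (k + 1) := lt_trans one_pos htk
    have hεk2le : ε k ^ 2 ≤ ((t (k + 1))⁻¹) ^ 2 := by
      rw [hεstep k hk, mul_pow]
      have h1 : ε (k + 1) ^ 2 ≤ 1 := by nlinarith [hεle1 (k + 1), hεpos (k + 1)]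
      nlinarith [sq_nonneg ((t (k+1))⁻¹)]
    have hsq_lt : ((t (k + 1))⁻¹) ^ 2 < (t (k + 1))⁻¹ := by
      have hinv : (t (k + 1))⁻¹ < 1 := inv_lt_one_of_one_lt₀ htk
      nlinarith [inv_pos.mpr htkpos]
    have hbd : abv (βseq k - s (αseq k)) = (t (k + 1))⁻¹ := by
      have heq : βseq k - s (αseq k) = (αseq k - s (αseq k)) + (βseq k - αseq k) := by ring
      rw [heq, hadd]
      · exact hdk
      rw [hdk, show βseq k - αseq k = -(αseq k - βseq k) by ring, abv.map_neg]
      exact lt_of_lt_of_le (lt_of_lt_of_le (key k hk.le) hεk2le) hsq_lt.le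
    rw [hs_eq] at h
    rw [sub_eq_zero.mpr h, abv.map_zero] at hbd
    exact absurd hbd.symm (ne_of_gt (inv_pos.mpr htkpos))
  · intro k hk
    apply hloc
    rw [show βseq k - αseq k = -(αseq k - βseq k) by ring, abv.map_neg]
    exact lt_of_lt_of_le (key k hk) (by nlinarith [hεle1 k, hεpos k])
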